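/- Let a = (1 + √10)/6, T₂ = {x ∈ ℝ² : x₁ > 1/2, ‖x − a·e₁‖ < 1/2, ‖x‖ < 1}, and S₂ = T₂ ∪ (−T₂). Then vol(S₂)/vol(B₂) > 1/4, where B₂ is the unit disk. -/

import Mathlib

open MeasureTheory Metric

noncomputable def a : ℝ := (1 + Real.sqrt 10) / 6

noncomputable def T2 : Set (EuclideanSpace ℝ (Fin 2)) :=
  {x | x 0 > 1/2 ∧ ‖x - a • EuclideanSpace.single (0 : Fin 2) (1 : ℝ)‖ < 1/2 ∧ ‖x‖ < 1}

noncomputable def Rect (p q h : ℝ) : Set (EuclideanSpace ℝ (Fin 2)) :=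
  {x | x 0 ∈ Set.Ioc p q ∧ x 1 ∈ Set.Ioo (-h) h}

lemma sqrt10_gt : (3.16227 : ℝ) < Real.sqrt 10 := by
  nlinarith [Real.sq_sqrt (by norm_num : (10:ℝ) ≥ 0), Real.sqrt_nonneg (10:ℝ)]

lemma sqrt10_lt : Real.sqrt 10 < 3.16228 := by
  nlinarith [Real.sq_sqrt (by norm_num : (10:ℝ) ≥ 0), Real.sqrt_nonneg (10:ℝ)]

lemma rect_eq (p q h : ℝ) : Rect p q h = ((MeasurableEquiv.toLp 2 (Fin 2 → ℝ)).symm) ⁻¹'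
    (Set.univ.pi fun i => if i = 0 then Set.Ioc p q else Set.Ioo (-h) h) := by
  ext x
  simp [Rect, Set.mem_pi, Fin.forall_fin_two, MeasurableEquiv.coe_toLp_symm]

lemma rect_meas (p q h : ℝ) : MeasurableSet (Rect p q h) := by
  rw [rect_eq]
  exact (MeasurableSet.univ_pi fun i => by
    split_ifs <;> [exact measurableSet_Ioc; exact measurableSet_Ioo]).preimage
    ((MeasurableEquiv.toLp 2 (Fin 2 → ℝ)).symm).measurable

lemma rect_vol (p q h : ℝ) :
    volume (Rect p q h) = ENNReal.ofReal (q - p) * ENNReal.ofReal (2 * h) := by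
  rw [rect_eq, (EuclideanSpace.volume_preserving_symm_measurableEquiv_toLp (Fin 2)).measure_preimage
    (MeasurableSet.univ_pi fun i => by
      split_ifs <;> [exact measurableSet_Ioc; exact measurableSet_Ioo]).nullMeasurableSet,
    volume_pi_pi, Fin.prod_univ_two]
  simp [Real.volume_Ioc, Real.volume_Ioo]
  ring_nf
  rw [ENNReal.ofReal_mul' (by norm_num), ENNReal.ofReal_ofNat, mul_assoc]

lemma rect_disj {p q h p' q' h' : ℝ} (hqp : q ≤ p') :
    Disjoint (Rect p q h) (Rect p' q' h') := by
  rw [Set.disjoint_left]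
  rintro x ⟨⟨_, h1⟩, _⟩ ⟨⟨h2, _⟩, _⟩
  linarith

lemma rect_subset (p q h : ℝ) (hp : 1/2 ≤ p) (hpq : p < q) (hh : 0 < h)
    (h1 : (p - a)^2 + h^2 ≤ 1/4) (h2 : (q - a)^2 + h^2 ≤ 1/4) (h3 : q^2 + h^2 ≤ 1) :
    Rect p q h ⊆ T2 := by
  rintro x ⟨⟨hx0p, hx0q⟩, hx1l, hx1u⟩
  have hy2 : (x 1)^2 < h^2 := by nlinarith
  refine ⟨by linarith, ?_, ?_⟩
  · have hnorm : ‖x - a • EuclideanSpace.single (0 : Fin 2) (1 : ℝ)‖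
        = Real.sqrt ((x 0 - a)^2 + (x 1)^2) := by
      rw [EuclideanSpace.norm_eq, Fin.sum_univ_two]
      simp [EuclideanSpace.single_apply, sq_abs]
    rw [hnorm, show (1/2 : ℝ) = Real.sqrt (1/4) by
      rw [show (1/4:ℝ) = (1/2)^2 by norm_num, Real.sqrt_sq]; norm_num]
    apply Real.sqrt_lt_sqrt (by positivity)
    nlinarith [mul_nonneg (le_of_lt (sub_pos.2 hx0p)) (sub_nonneg.2 hx0q)]
  · have hnorm : ‖x‖ = Real.sqrt ((x 0)^2 + (x 1)^2) := by
      rw [EuclideanSpace.norm_eq, Fin.sum_univ_two]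
      simp [sq_abs]
    rw [hnorm, show (1 : ℝ) = Real.sqrt 1 by rw [Real.sqrt_one]]
    apply Real.sqrt_lt_sqrt (by positivity)
    nlinarith

lemma sub_T2 (p q h : ℝ) (hp : 1/2 ≤ p) (hpq : p < q) (hh : 0 < h)
    (h1 : (p - (1 + Real.sqrt 10) / 6)^2 + h^2 ≤ 1/4)
    (h2 : (q - (1 + Real.sqrt 10) / 6)^2 + h^2 ≤ 1/4) (h3 : q^2 + h^2 ≤ 1) :
    Rect p q h ⊆ T2 :=
  rect_subset p q h hp hpq hh h1 h2 h3


lemma strip0 : Rect (1/2 : ℝ) (273/500 : ℝ) (46093/100000 : ℝ) ⊆ T2 := by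
  apply sub_T2 <;>
    nlinarith [sqrt10_gt, sqrt10_lt, Real.sq_sqrt (by norm_num : (10:ℝ) ≥ 0)]


lemma strip1 : Rect (273/500 : ℝ) (74/125 : ℝ) (23883/50000 : ℝ) ⊆ T2 := by
  apply sub_T2 <;>
    nlinarith [sqrt10_gt, sqrt10_lt, Real.sq_sqrt (by norm_num : (10:ℝ) ≥ 0)]


lemma strip2 : Rect (74/125 : ℝ) (319/500 : ℝ) (6119/12500 : ℝ) ⊆ T2 := by
  apply sub_T2 <;>
    nlinarith [sqrt10_gt, sqrt10_lt, Real.sq_sqrt (by norm_num : (10:ℝ) ≥ 0)]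


lemma strip3 : Rect (319/500 : ℝ) (171/250 : ℝ) (24843/50000 : ℝ) ⊆ T2 := by
  apply sub_T2 <;>
    nlinarith [sqrt10_gt, sqrt10_lt, Real.sq_sqrt (by norm_num : (10:ℝ) ≥ 0)]


lemma strip4 : Rect (171/250 : ℝ) (73/100 : ℝ) (24933/50000 : ℝ) ⊆ T2 := by
  apply sub_T2 <;>
    nlinarith [sqrt10_gt, sqrt10_lt, Real.sq_sqrt (by norm_num : (10:ℝ) ≥ 0)]


lemma strip5 : Rect (73/100 : ℝ) (97/125 : ℝ) (12329/25000 : ℝ) ⊆ T2 := by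
  apply sub_T2 <;>
    nlinarith [sqrt10_gt, sqrt10_lt, Real.sq_sqrt (by norm_num : (10:ℝ) ≥ 0)]


lemma strip6 : Rect (97/125 : ℝ) (411/500 : ℝ) (12081/25000 : ℝ) ⊆ T2 := by
  apply sub_T2 <;>
    nlinarith [sqrt10_gt, sqrt10_lt, Real.sq_sqrt (by norm_num : (10:ℝ) ≥ 0)]


lemma strip7 : Rect (411/500 : ℝ) (217/250 : ℝ) (23431/50000 : ℝ) ⊆ T2 := by
  apply sub_T2 <;>
    nlinarith [sqrt10_gt, sqrt10_lt, Real.sq_sqrt (by norm_num : (10:ℝ) ≥ 0)]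


lemma strip8 : Rect (217/250 : ℝ) (457/500 : ℝ) (40569/100000 : ℝ) ⊆ T2 := by
  apply sub_T2 <;>
    nlinarith [sqrt10_gt, sqrt10_lt, Real.sq_sqrt (by norm_num : (10:ℝ) ≥ 0)]


lemma strip9 : Rect (457/500 : ℝ) (24/25 : ℝ) (27997/100000 : ℝ) ⊆ T2 := by
  apply sub_T2 <;>
    nlinarith [sqrt10_gt, sqrt10_lt, Real.sq_sqrt (by norm_num : (10:ℝ) ≥ 0)]


lemma hUvol : volume ((Rect (1/2 : ℝ) (273/500 : ℝ) (46093/100000 : ℝ) ∪ (Rect (273/500 : ℝ) (74/125 : ℝ) (23883/50000 : ℝ) ∪ (Rect (74/125 : ℝ) (319/500 : ℝ) (6119/12500 : ℝ) ∪ (Rect (319/500 : ℝ) (171/250 : ℝ) (24843/50000 : ℝ) ∪ (Rect (171/250 : ℝ) (73/100 : ℝ) (24933/50000 : ℝ) ∪ (Rect (73/100 : ℝ) (97/125 : ℝ) (12329/25000 : ℝ) ∪ (Rect (97/125 : ℝ) (411/500 : ℝ) (12081/25000 : ℝ) ∪ (Rect (411/500 : ℝ) (217/250 : ℝ) (23431/50000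 : ℝ) ∪ (Rect (217/250 : ℝ) (457/500 : ℝ) (40569/100000 : ℝ) ∪ Rect (457/500 : ℝ) (24/25 : ℝ) (27997/100000 : ℝ))))))))))) = ENNReal.ofReal (10474913/25000000 : ℝ) := by
  have d0 : Disjoint (Rect (1/2 : ℝ) (273/500 : ℝ) (46093/100000 : ℝ)) ((Rect (273/500 : ℝ) (74/125 : ℝ) (23883/50000 : ℝ) ∪ (Rect (74/125 : ℝ) (319/500 : ℝ) (6119/12500 : ℝ) ∪ (Rect (319/500 : ℝ) (171/250 : ℝ) (24843/50000 : ℝ) ∪ (Rect (171/250 : ℝ) (73/100 : ℝ) (24933/50000 : ℝ) ∪ (Rect (73/100 : ℝ) (97/125 : ℝ) (12329/25000 : ℝ) ∪ (Rect (97/125 : ℝ) (411/500 : ℝ) (12081/25000 : ℝ) ∪ (Rect (411/500 : ℝ) (217/250 : ℝ) (23431/50000 : ℝ) ∪ (Rect (217/250 : ℝ) (457/500 : ℝ) (40569/100000 : ℝ) ∪ Rect (457/500 : ℝ) (24/25 : ℝ) (27997/100000 : ℝ)))))))))) := by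
      refine Disjoint.union_right (rect_disj (by norm_num)) ?_
      refine Disjoint.union_right (rect_disj (by norm_num)) ?_
      refine Disjoint.union_right (rect_disj (by norm_num)) ?_
      refine Disjoint.union_right (rect_disj (by norm_num)) ?_
      refine Disjoint.union_right (rect_disj (by norm_num)) ?_
      refine Disjoint.union_right (rect_disj (by norm_num)) ?_
      refine Disjoint.union_right (rect_disj (by norm_num)) ?_
      refine Disjoint.union_right (rect_disj (by norm_num)) ?_
      exact rect_disj (by norm_num)
  have m0 : MeasurableSet ((Rect (273/500 : ℝ) (74/125 : ℝ) (23883/50000 : ℝ) ∪ (Rect (74/125 : ℝ) (319/500 : ℝ) (6119/12500 : ℝ) ∪ (Rect (319/500 : ℝ) (171/250 : ℝ) (24843/50000 : ℝ) ∪ (Rect (171/250 : ℝ) (73/100 : ℝ) (24933/50000 : ℝ) ∪ (Rect (73/100 : ℝ) (97/125 : ℝ) (12329/25000 : ℝ) ∪ (Rect (97/125 : ℝ) (411/500 : ℝ) (12081/25000 : ℝ) ∪ (Rect (411/500 : ℝ) (217/250 : ℝ) (23431/50000 : ℝ) ∪ (Rect (217/250 : ℝ) (457/500 : ℝ) (40569/100000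 : ℝ) ∪ Rect (457/500 : ℝ) (24/25 : ℝ) (27997/100000 : ℝ)))))))))) := (rect_meas _ _ _).union ((rect_meas _ _ _).union ((rect_meas _ _ _).union ((rect_meas _ _ _).union ((rect_meas _ _ _).union ((rect_meas _ _ _).union ((rect_meas _ _ _).union ((rect_meas _ _ _).union (rect_meas _ _ _))))))))
  have d1 : Disjoint (Rect (273/500 : ℝ) (74/125 : ℝ) (23883/50000 : ℝ)) ((Rect (74/125 : ℝ) (319/500 : ℝ) (6119/12500 : ℝ) ∪ (Rect (319/500 : ℝ) (171/250 : ℝ) (24843/50000 : ℝ) ∪ (Rect (171/250 : ℝ) (73/100 : ℝ) (24933/50000 : ℝ) ∪ (Rect (73/100 : ℝ) (97/125 : ℝ) (12329/25000 : ℝ) ∪ (Rect (97/125 : ℝ) (411/500 : ℝ) (12081/25000 : ℝ) ∪ (Rect (411/500 : ℝ) (217/250 : ℝ) (23431/50000 : ℝ) ∪ (Rect (217/250 : ℝ) (457/500 : ℝ) (40569/100000 : ℝ) ∪ Rect (457/500 : ℝ) (24/25 : ℝ) (27997/100000 : ℝ))))))))) := by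
      refine Disjoint.union_right (rect_disj (by norm_num)) ?_
      refine Disjoint.union_right (rect_disj (by norm_num)) ?_
      refine Disjoint.union_right (rect_disj (by norm_num)) ?_
      refine Disjoint.union_right (rect_disj (by norm_num)) ?_
      refine Disjoint.union_right (rect_disj (by norm_num)) ?_
      refine Disjoint.union_right (rect_disj (by norm_num)) ?_
      refine Disjoint.union_right (rect_disj (by norm_num)) ?_
      exact rect_disj (by norm_num)
  have m1 : MeasurableSet ((Rect (74/125 : ℝ) (319/500 : ℝ) (6119/12500 : ℝ) ∪ (Rect (319/500 : ℝ) (171/250 : ℝ) (24843/50000 : ℝ) ∪ (Rect (171/250 : ℝ) (73/100 : ℝ) (24933/50000 : ℝ) ∪ (Rect (73/100 : ℝ) (97/125 : ℝ) (12329/25000 : ℝ) ∪ (Rect (97/125 : ℝ) (411/500 : ℝ) (12081/25000 : ℝ) ∪ (Rect (411/500 : ℝ) (217/250 : ℝ) (23431/50000 : ℝ) ∪ (Rect (217/250 : ℝ) (457/500 : ℝ) (40569/100000 : ℝ) ∪ Rect (457/500 : ℝ) (24/25 : ℝ) (27997/100000 : ℝ))))))))) := (rect_meas _ _ _).union ((rect_meas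 _ _ _).union ((rect_meas _ _ _).union ((rect_meas _ _ _).union ((rect_meas _ _ _).union ((rect_meas _ _ _).union ((rect_meas _ _ _).union (rect_meas _ _ _)))))))
  have d2 : Disjoint (Rect (74/125 : ℝ) (319/500 : ℝ) (6119/12500 : ℝ)) ((Rect (319/500 : ℝ) (171/250 : ℝ) (24843/50000 : ℝ) ∪ (Rect (171/250 : ℝ) (73/100 : ℝ) (24933/50000 : ℝ) ∪ (Rect (73/100 : ℝ) (97/125 : ℝ) (12329/25000 : ℝ) ∪ (Rect (97/125 : ℝ) (411/500 : ℝ) (12081/25000 : ℝ) ∪ (Rect (411/500 : ℝ) (217/250 : ℝ) (23431/50000 : ℝ) ∪ (Rect (217/250 : ℝ) (457/500 : ℝ) (40569/100000 : ℝ) ∪ Rect (457/500 : ℝ) (24/25 : ℝ) (27997/100000 : ℝ)))))))) := by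
      refine Disjoint.union_right (rect_disj (by norm_num)) ?_
      refine Disjoint.union_right (rect_disj (by norm_num)) ?_
      refine Disjoint.union_right (rect_disj (by norm_num)) ?_
      refine Disjoint.union_right (rect_disj (by norm_num)) ?_
      refine Disjoint.union_right (rect_disj (by norm_num)) ?_
      refine Disjoint.union_right (rect_disj (by norm_num)) ?_
      exact rect_disj (by norm_num)
  have m2 : MeasurableSet ((Rect (319/500 : ℝ) (171/250 : ℝ) (24843/50000 : ℝ) ∪ (Rect (171/250 : ℝ) (73/100 : ℝ) (24933/50000 : ℝ) ∪ (Rect (73/100 : ℝ) (97/125 : ℝ) (12329/25000 : ℝ) ∪ (Rect (97/125 : ℝ) (411/500 : ℝ) (12081/25000 : ℝ) ∪ (Rect (411/500 : ℝ) (217/250 : ℝ) (23431/50000 : ℝ) ∪ (Rect (217/250 : ℝ) (457/500 : ℝ) (40569/100000 : ℝ) ∪ Rect (457/500 : ℝ) (24/25 : ℝ) (27997/100000 : ℝ)))))))) := (rect_meas _ _ _).union ((rect_meas _ _ _).union ((rect_meas _ _ _).union ((rect_meas _ _ _).union ((rect_meas _ _ _).union ((rect_meas _ _ _).union (rect_meas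 _ _ _))))))
  have d3 : Disjoint (Rect (319/500 : ℝ) (171/250 : ℝ) (24843/50000 : ℝ)) ((Rect (171/250 : ℝ) (73/100 : ℝ) (24933/50000 : ℝ) ∪ (Rect (73/100 : ℝ) (97/125 : ℝ) (12329/25000 : ℝ) ∪ (Rect (97/125 : ℝ) (411/500 : ℝ) (12081/25000 : ℝ) ∪ (Rect (411/500 : ℝ) (217/250 : ℝ) (23431/50000 : ℝ) ∪ (Rect (217/250 : ℝ) (457/500 : ℝ) (40569/100000 : ℝ) ∪ Rect (457/500 : ℝ) (24/25 : ℝ) (27997/100000 : ℝ))))))) := by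
      refine Disjoint.union_right (rect_disj (by norm_num)) ?_
      refine Disjoint.union_right (rect_disj (by norm_num)) ?_
      refine Disjoint.union_right (rect_disj (by norm_num)) ?_
      refine Disjoint.union_right (rect_disj (by norm_num)) ?_
      refine Disjoint.union_right (rect_disj (by norm_num)) ?_
      exact rect_disj (by norm_num)
  have m3 : MeasurableSet ((Rect (171/250 : ℝ) (73/100 : ℝ) (24933/50000 : ℝ) ∪ (Rect (73/100 : ℝ) (97/125 : ℝ) (12329/25000 : ℝ) ∪ (Rect (97/125 : ℝ) (411/500 : ℝ) (12081/25000 : ℝ) ∪ (Rect (411/500 : ℝ) (217/250 : ℝ) (23431/50000 : ℝ) ∪ (Rect (217/250 : ℝ) (457/500 : ℝ) (40569/100000 : ℝ) ∪ Rect (457/500 : ℝ) (24/25 : ℝ) (27997/100000 : ℝ))))))) := (rect_meas _ _ _).union ((rect_meas _ _ _).union ((rect_meas _ _ _).union ((rect_meas _ _ _).union ((rect_meas _ _ _).union (rect_meas _ _ _)))))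
  have d4 : Disjoint (Rect (171/250 : ℝ) (73/100 : ℝ) (24933/50000 : ℝ)) ((Rect (73/100 : ℝ) (97/125 : ℝ) (12329/25000 : ℝ) ∪ (Rect (97/125 : ℝ) (411/500 : ℝ) (12081/25000 : ℝ) ∪ (Rect (411/500 : ℝ) (217/250 : ℝ) (23431/50000 : ℝ) ∪ (Rect (217/250 : ℝ) (457/500 : ℝ) (40569/100000 : ℝ) ∪ Rect (457/500 : ℝ) (24/25 : ℝ) (27997/100000 : ℝ)))))) := by
      refine Disjoint.union_right (rect_disj (by norm_num)) ?_
      refine Disjoint.union_right (rect_disj (by norm_num)) ?_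
      refine Disjoint.union_right (rect_disj (by norm_num)) ?_
      refine Disjoint.union_right (rect_disj (by norm_num)) ?_
      exact rect_disj (by norm_num)
  have m4 : MeasurableSet ((Rect (73/100 : ℝ) (97/125 : ℝ) (12329/25000 : ℝ) ∪ (Rect (97/125 : ℝ) (411/500 : ℝ) (12081/25000 : ℝ) ∪ (Rect (411/500 : ℝ) (217/250 : ℝ) (23431/50000 : ℝ) ∪ (Rect (217/250 : ℝ) (457/500 : ℝ) (40569/100000 : ℝ) ∪ Rect (457/500 : ℝ) (24/25 : ℝ) (27997/100000 : ℝ)))))) := (rect_meas _ _ _).union ((rect_meas _ _ _).union ((rect_meas _ _ _).union ((rect_meas _ _ _).union (rect_meas _ _ _))))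
  have d5 : Disjoint (Rect (73/100 : ℝ) (97/125 : ℝ) (12329/25000 : ℝ)) ((Rect (97/125 : ℝ) (411/500 : ℝ) (12081/25000 : ℝ) ∪ (Rect (411/500 : ℝ) (217/250 : ℝ) (23431/50000 : ℝ) ∪ (Rect (217/250 : ℝ) (457/500 : ℝ) (40569/100000 : ℝ) ∪ Rect (457/500 : ℝ) (24/25 : ℝ) (27997/100000 : ℝ))))) := by
      refine Disjoint.union_right (rect_disj (by norm_num)) ?_
      refine Disjoint.union_right (rect_disj (by norm_num)) ?_
      refine Disjoint.union_right (rect_disj (by norm_num)) ?_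
      exact rect_disj (by norm_num)
  have m5 : MeasurableSet ((Rect (97/125 : ℝ) (411/500 : ℝ) (12081/25000 : ℝ) ∪ (Rect (411/500 : ℝ) (217/250 : ℝ) (23431/50000 : ℝ) ∪ (Rect (217/250 : ℝ) (457/500 : ℝ) (40569/100000 : ℝ) ∪ Rect (457/500 : ℝ) (24/25 : ℝ) (27997/100000 : ℝ))))) := (rect_meas _ _ _).union ((rect_meas _ _ _).union ((rect_meas _ _ _).union (rect_meas _ _ _)))
  have d6 : Disjoint (Rect (97/125 : ℝ) (411/500 : ℝ) (12081/25000 : ℝ)) ((Rect (411/500 : ℝ) (217/250 : ℝ) (23431/50000 : ℝ) ∪ (Rect (217/250 : ℝ) (457/500 : ℝ) (40569/100000 : ℝ) ∪ Rect (457/500 : ℝ) (24/25 : ℝ) (27997/100000 : ℝ)))) := by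
      refine Disjoint.union_right (rect_disj (by norm_num)) ?_
      refine Disjoint.union_right (rect_disj (by norm_num)) ?_
      exact rect_disj (by norm_num)
  have m6 : MeasurableSet ((Rect (411/500 : ℝ) (217/250 : ℝ) (23431/50000 : ℝ) ∪ (Rect (217/250 : ℝ) (457/500 : ℝ) (40569/100000 : ℝ) ∪ Rect (457/500 : ℝ) (24/25 : ℝ) (27997/100000 : ℝ)))) := (rect_meas _ _ _).union ((rect_meas _ _ _).union (rect_meas _ _ _))
  have d7 : Disjoint (Rect (411/500 : ℝ) (217/250 : ℝ) (23431/50000 : ℝ)) ((Rect (217/250 : ℝ) (457/500 : ℝ) (40569/100000 : ℝ) ∪ Rect (457/500 : ℝ) (24/25 : ℝ) (27997/100000 : ℝ))) := by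
      refine Disjoint.union_right (rect_disj (by norm_num)) ?_
      exact rect_disj (by norm_num)
  have m7 : MeasurableSet ((Rect (217/250 : ℝ) (457/500 : ℝ) (40569/100000 : ℝ) ∪ Rect (457/500 : ℝ) (24/25 : ℝ) (27997/100000 : ℝ))) := (rect_meas _ _ _).union (rect_meas _ _ _)
  have d8 : Disjoint (Rect (217/250 : ℝ) (457/500 : ℝ) (40569/100000 : ℝ)) (Rect (457/500 : ℝ) (24/25 : ℝ) (27997/100000 : ℝ)) := by
      exact rect_disj (by norm_num)
  have m8 : MeasurableSet (Rect (457/500 : ℝ) (24/25 : ℝ) (27997/100000 : ℝ)) := rect_meas _ _ _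
  rw [measure_union d0 m0, measure_union d1 m1, measure_union d2 m2, measure_union d3 m3, measure_union d4 m4, measure_union d5 m5, measure_union d6 m6, measure_union d7 m7, measure_union d8 m8]
  simp only [rect_vol]
  norm_num [← ENNReal.ofReal_mul, ← ENNReal.ofReal_add]

lemma hT2lower : ENNReal.ofReal (10474913/25000000 : ℝ) ≤ volume T2 := by
  rw [← hUvol]
  apply measure_mono
  refine Set.union_subset strip0 (Set.union_subset strip1 (Set.union_subset strip2
    (Set.union_subset strip3 (Set.union_subset strip4 (Set.union_subset strip5
    (Set.union_subset strip6 (Set.union_subset strip7 (Set.union_subset strip8 strip9))))))))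

lemma hT2meas : MeasurableSet T2 := by
  have : T2 = (fun x : EuclideanSpace ℝ (Fin 2) => x 0) ⁻¹' (Set.Ioi (1/2)) ∩
      (ball (a • EuclideanSpace.single (0 : Fin 2) (1 : ℝ)) (1/2) ∩ ball 0 1) := by
    ext x
    simp only [T2, Set.mem_setOf_eq, Set.mem_inter_iff, Set.mem_preimage, Set.mem_Ioi,
      mem_ball_iff_norm, mem_ball_zero_iff, sub_zero]
  rw [this]
  have hm0 : Measurable fun x : EuclideanSpace ℝ (Fin 2) => x 0 :=
    (measurable_pi_apply 0).comp ((MeasurableEquiv.toLp 2 (Fin 2 → ℝ)).symm).measurable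
  exact (hm0 measurableSet_Ioi).inter (measurableSet_ball.inter measurableSet_ball)

theorem stmt_8 :
    (volume (T2 ∪ -T2)).toReal >
      (1/4) * (volume (ball (0 : EuclideanSpace ℝ (Fin 2)) 1)).toReal := by
  have hball : (volume (ball (0 : EuclideanSpace ℝ (Fin 2)) 1)).toReal = Real.pi := by
    rw [EuclideanSpace.volume_ball]
    simp [show (1:ℝ)+1 = 2 from by norm_num, Real.Gamma_two,
      Real.sq_sqrt Real.pi_pos.le, ENNReal.toReal_ofReal Real.pi_pos.le]
  have hdisj : Disjoint T2 (-T2) := by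
    rw [Set.disjoint_left]
    intro x hx hnx
    have h1 : x 0 > 1/2 := hx.1
    have h2 : (-x) 0 > 1/2 := hnx.1
    have : (-x) 0 = -(x 0) := rfl
    linarith [this ▸ h2]
  have hunion : volume (T2 ∪ -T2) = volume T2 + volume T2 := by
    rw [measure_union hdisj hT2meas.neg, Measure.measure_neg]
  have hsubball : T2 ∪ -T2 ⊆ ball (0 : EuclideanSpace ℝ (Fin 2)) 1 := by
    rintro x (hx | hx)
    · exact mem_ball_zero_iff.2 hx.2.2
    · have := hx.2.2
      rw [mem_ball_zero_iff, ← norm_neg]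
      exact this
  have hfin : volume (T2 ∪ -T2) ≠ ⊤ := by
    refine ne_top_of_le_ne_top ?_ (measure_mono hsubball)
    rw [EuclideanSpace.volume_ball]
    exact ENNReal.mul_ne_top (by simp) ENNReal.ofReal_ne_top
  have hle : ENNReal.ofReal (10474913/12500000 : ℝ) ≤ volume (T2 ∪ -T2) := by
    rw [hunion, show ENNReal.ofReal (10474913/12500000 : ℝ) =
        ENNReal.ofReal (10474913/25000000 : ℝ) + ENNReal.ofReal (10474913/25000000 : ℝ) by
      rw [← ENNReal.ofReal_add (by norm_num) (by norm_num)]; norm_num]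
    exact add_le_add hT2lower hT2lower
  have htr := ENNReal.toReal_mono hfin hle
  rw [ENNReal.toReal_ofReal (by norm_num)] at htr
  rw [hball]
  have hpi := Real.pi_lt_d2
  linarith
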